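/- Let H be a complex separable Hilbert space, let M be a POV measure on a measurable space (X, 𝒜) and let P be a PV measure on a measurable space (Y, ℬ). The following conditions are equivalent: (i) ℛ(P) ⊆ ℛ(M); (ii) there exists a weak Markov kernel ν with respect to M, with values in {0,1}, such that P = ν∘M; (iii) there exists a weak Markov kernel ν with respect to M such that P = ν∘M. -/

import Mathlib

open MeasureTheory ComplexOrder
open scoped Classical

noncomputable section

variable {H : Type*} [NormedAddCommGroup H] [InnerProductSpace ℂ H] [CompleteSpace H]

set_option maxHeartbeats 1000000
set_option synthInstance.maxHeartbeats 1000000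
set_option linter.unusedSectionVars false

lemma pos_apply_eq_zero {T : H →L[ℂ] H} (hT : T.IsPositive) {ψ : H}
    (h : (inner ℂ ψ (T ψ) : ℂ) = 0) : T ψ = 0 := by
  have hT' : 0 ≤ T := (T.nonneg_iff_isPositive).2 hT
  set S := CFC.sqrt T with hS
  have hS0 : 0 ≤ S := CFC.sqrt_nonneg T
  have hSS : S * S = T := CFC.sqrt_mul_sqrt_self T hT'
  have hsym := (ContinuousLinearMap.isSelfAdjoint_iff_isSymmetric.mp
    ((S.nonneg_iff_isPositive).1 hS0).isSelfAdjoint)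
  have h2 : (inner ℂ (S ψ) (S ψ) : ℂ) = 0 := by
    have h1 := hsym ψ (S ψ)
    have h3 : (inner ℂ ψ (S (S ψ)) : ℂ) = 0 := by
      rw [← h, ← hSS]; rfl
    rw [show (inner ℂ (S ψ) (S ψ) : ℂ) = inner ℂ ψ (S (S ψ)) from h1, h3]
  have hSψ : S ψ = 0 := by rwa [inner_self_eq_zero] at h2
  rw [← hSS]
  show S (S ψ) = 0
  rw [hSψ, map_zero]

lemma sa_inner_self_real {T : H →L[ℂ] H} (hsa : IsSelfAdjoint T) (ψ : H) :
    (inner ℂ ψ (T ψ) : ℂ) = (((inner ℂ ψ (T ψ) : ℂ).re : ℝ) : ℂ) := by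
  have hsym := ContinuousLinearMap.isSelfAdjoint_iff_isSymmetric.mp hsa
  have h1 : (starRingEnd ℂ) (inner ℂ ψ (T ψ) : ℂ) = inner ℂ ψ (T ψ) := by
    rw [inner_conj_symm]
    exact hsym ψ ψ
  rw [Complex.conj_eq_iff_re] at h1
  exact h1.symm

lemma clm_ext_inner {S T : H →L[ℂ] H}
    (h : ∀ ψ : H, (inner ℂ ψ (S ψ) : ℂ) = inner ℂ ψ (T ψ)) : S = T := by
  have : (S : H →ₗ[ℂ] H) = (T : H →ₗ[ℂ] H) := by
    rw [← ext_inner_map]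
    intro x
    have := h x
    calc (inner ℂ ((S : H →ₗ[ℂ] H) x) x : ℂ) = (starRingEnd ℂ) (inner ℂ x (S x)) := by
          rw [inner_conj_symm]; rfl
      _ = (starRingEnd ℂ) (inner ℂ x (T x)) := by rw [h x]
      _ = inner ℂ ((T : H →ₗ[ℂ] H) x) x := by rw [inner_conj_symm]; rfl
  exact ContinuousLinearMap.coe_injective this

lemma proj_isPositive {Q : H →L[ℂ] H} (hsa : IsSelfAdjoint Q) (h2 : Q * Q = Q) :
    Q.IsPositive := by
  refine ⟨ContinuousLinearMap.isSelfAdjoint_iff_isSymmetric.mp hsa, fun x => ?_⟩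
  have hsym := ContinuousLinearMap.isSelfAdjoint_iff_isSymmetric.mp hsa
  rw [ContinuousLinearMap.reApplyInnerSelf]
  have : (inner ℂ (Q x) x : ℂ) = inner ℂ (Q x) (Q x) := by
    calc (inner ℂ (Q x) x : ℂ) = inner ℂ ((Q * Q) x) x := by rw [h2]
      _ = inner ℂ (Q (Q x)) x := rfl
      _ = inner ℂ (Q x) (Q x) := hsym (Q x) x
  rw [this]
  exact inner_self_nonneg

/-- If `0 ≤ T ≤ Q` with `Q` a projection then `T = Q T Q`; we record `T * Q = T`
and `Q * T = T`. -/
lemma sandwich {T Q : H →L[ℂ] H} (hT : T.IsPositive) (hQsa : IsSelfAdjoint Q)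
    (hQ2 : Q * Q = Q) (hle : (Q - T).IsPositive) : T * Q = T ∧ Q * T = T := by
  have h1 : ∀ φ : H, T (φ - Q φ) = 0 := by
    intro φ
    set ψ := φ - Q φ with hψ
    have hQψ : Q ψ = 0 := by
      simp only [hψ, map_sub]
      rw [show Q (Q φ) = (Q * Q) φ from rfl, hQ2]
      simp
    have hre : (inner ℂ ψ (T ψ) : ℂ).re = 0 := by
      have hge : 0 ≤ (inner ℂ ψ (T ψ) : ℂ).re := hT.re_inner_nonneg_right ψ
      have hle' : 0 ≤ (inner ℂ ψ ((Q - T) ψ) : ℂ).re := hle.re_inner_nonneg_right ψ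
      have : (inner ℂ ψ ((Q - T) ψ) : ℂ) = - inner ℂ ψ (T ψ) := by
        rw [ContinuousLinearMap.sub_apply, inner_sub_right, hQψ, inner_zero_right, zero_sub]
      rw [this] at hle'
      simp only [Complex.neg_re] at hle'
      linarith
    have : (inner ℂ ψ (T ψ) : ℂ) = 0 := by
      rw [sa_inner_self_real hT.isSelfAdjoint ψ, hre]
      simp
    exact pos_apply_eq_zero hT this
  have hTQ : T * Q = T := by
    ext φ
    have := h1 φ
    have h2 : T φ - T (Q φ) = 0 := by rw [← map_sub]; exact this
    have h3 : T (Q φ) = T φ := by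
      have := sub_eq_zero.mp h2
      exact this.symm
    exact h3
  refine ⟨hTQ, ?_⟩
  have : star (T * Q) = star T := by rw [hTQ]
  rw [star_mul, hQsa.star_eq, hT.isSelfAdjoint.star_eq] at this
  exact this

/-- Orthogonality of projections dominated by complementary projections. -/
lemma proj_mul_eq_zero {Q₁ Q₂ : H →L[ℂ] H} (h1sa : IsSelfAdjoint Q₁) (h12 : Q₁ * Q₁ = Q₁)
    (h2sa : IsSelfAdjoint Q₂) (h22 : Q₂ * Q₂ = Q₂)
    (hle : ((1 - Q₁) - Q₂).IsPositive) : Q₁ * Q₂ = 0 := by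
  have hz : Q₁ * (1 - Q₁) = 0 := by rw [mul_sub, mul_one, h12, sub_self]
  have hQ : ((1 - Q₁) : H →L[ℂ] H) * (1 - Q₁) = 1 - Q₁ := by
    rw [sub_mul, one_mul, hz, sub_zero]
  have hQsa : IsSelfAdjoint ((1 : H →L[ℂ] H) - Q₁) := (IsSelfAdjoint.one _).sub h1sa
  obtain ⟨-, hQT⟩ := sandwich (proj_isPositive h2sa h22) hQsa hQ hle
  -- hQT : (1 - Q₁) * Q₂ = Q₂
  have : Q₁ * ((1 - Q₁) * Q₂) = Q₁ * Q₂ := by rw [hQT]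
  rw [← mul_assoc, mul_sub, mul_one, h12, sub_self, zero_mul] at this
  exact this.symm

lemma zero_of_sandwich_two {T Q₁ Q₂ : H →L[ℂ] H} (hT : T.IsPositive)
    (h1sa : IsSelfAdjoint Q₁) (h12 : Q₁ * Q₁ = Q₁)
    (h2sa : IsSelfAdjoint Q₂) (h22 : Q₂ * Q₂ = Q₂)
    (hle1 : (Q₁ - T).IsPositive) (hle2 : (Q₂ - T).IsPositive)
    (horth : Q₁ * Q₂ = 0) : T = 0 := by
  obtain ⟨hTQ1, hQ1T⟩ := sandwich hT h1sa h12 hle1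
  obtain ⟨hTQ2, hQ2T⟩ := sandwich hT h2sa h22 hle2
  calc T = Q₁ * T := hQ1T.symm
    _ = Q₁ * (Q₂ * T) := by rw [hQ2T]
    _ = (Q₁ * Q₂) * T := by rw [mul_assoc]
    _ = 0 := by rw [horth, zero_mul]


/-- A (normalized) positive operator valued measure on the measurable space `X`:
`0 ≤ M A ≤ 1`, `M ∅ = 0`, `M univ = 1`, and `M` is weakly σ-additive. -/
structure IsPOVM {X : Type*} [MeasurableSpace X] (M : Set X → (H →L[ℂ] H)) : Prop where
  pos : ∀ A : Set X, MeasurableSet A → (M A).IsPositive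
  le_one : ∀ A : Set X, MeasurableSet A → ((1 : H →L[ℂ] H) - M A).IsPositive
  empty : M ∅ = 0
  univ : M Set.univ = 1
  m_iUnion : ∀ (ψ : H) (A : ℕ → Set X), (∀ n, MeasurableSet (A n)) →
    Pairwise (Function.onFun Disjoint A) →
    HasSum (fun n => (inner ℂ ψ (M (A n) ψ) : ℂ)) (inner ℂ ψ (M (⋃ n, A n) ψ))

/-- binary operator additivity from weak σ-additivity -/
lemma IsPOVM.add_of_disjoint {X : Type*} [MeasurableSpace X] {M : Set X → (H →L[ℂ] H)}
    (hM : IsPOVM M) {A₁ A₂ : Set X} (h1 : MeasurableSet A₁) (h2 : MeasurableSet A₂)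
    (hd : Disjoint A₁ A₂) : M (A₁ ∪ A₂) = M A₁ + M A₂ := by
  classical
  set f : ℕ → Set X := fun n => if n = 0 then A₁ else if n = 1 then A₂ else ∅ with hf
  have hmeas : ∀ n, MeasurableSet (f n) := by
    intro n
    simp only [hf]
    split_ifs <;> simp [h1, h2]
  have hdis : Pairwise (Function.onFun Disjoint f) := by
    intro n m hnm
    simp only [Function.onFun, hf]
    split_ifs with ha hb hc hd' he <;>
      first
        | (exfalso; omega)
        | exact hd
        | exact hd.symm
        | simp
  have hU : (⋃ n, f n) = A₁ ∪ A₂ := by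
    apply Set.Subset.antisymm
    · apply Set.iUnion_subset
      intro n
      simp only [hf]
      split_ifs <;> simp [Set.subset_union_left, Set.subset_union_right]
    · intro x hx
      rcases hx with hx | hx
      · exact Set.mem_iUnion.2 ⟨0, by simp [hf, hx]⟩
      · exact Set.mem_iUnion.2 ⟨1, by simp [hf, hx]⟩
  apply clm_ext_inner
  intro ψ
  have hsum := hM.m_iUnion ψ f hmeas hdis
  rw [hU] at hsum
  have hsum2 : HasSum (fun n => (inner ℂ ψ (M (f n) ψ) : ℂ))
      ((inner ℂ ψ (M A₁ ψ) : ℂ) + inner ℂ ψ (M A₂ ψ)) := by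
    have e1 : HasSum (fun n : ℕ => if n = 0 then (inner ℂ ψ (M A₁ ψ) : ℂ) else 0)
        (inner ℂ ψ (M A₁ ψ)) := hasSum_ite_eq 0 _
    have e2 : HasSum (fun n : ℕ => if n = 1 then (inner ℂ ψ (M A₂ ψ) : ℂ) else 0)
        (inner ℂ ψ (M A₂ ψ)) := hasSum_ite_eq 1 _
    have := e1.add e2
    convert this using 1
    funext n
    simp only [hf]
    rcases n with _ | _ | n <;> simp [hM.empty]
  rw [ContinuousLinearMap.add_apply, inner_add_right]
  exact hsum.unique hsum2

lemma IsPOVM.mono {X : Type*} [MeasurableSpace X] {M : Set X → (H →L[ℂ] H)}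
    (hM : IsPOVM M) {A₁ A₂ : Set X} (h1 : MeasurableSet A₁) (h2 : MeasurableSet A₂)
    (hsub : A₁ ⊆ A₂) : (M A₂ - M A₁).IsPositive := by
  have := hM.add_of_disjoint h1 (h2.diff h1) Set.disjoint_sdiff_right
  rw [Set.union_diff_cancel hsub] at this
  rw [this]
  simpa using hM.pos _ (h2.diff h1)

lemma IsPOVM.compl_add {X : Type*} [MeasurableSpace X] {M : Set X → (H →L[ℂ] H)}
    (hM : IsPOVM M) {A : Set X} (hA : MeasurableSet A) : M A + M Aᶜ = 1 := by
  have := hM.add_of_disjoint hA hA.compl disjoint_compl_right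
  rw [Set.union_compl_self, hM.univ] at this
  exact this.symm

/-- A projection valued (PV) measure: a POV measure whose values are orthogonal
projections (self-adjointness is part of positivity). -/
def IsPVM {X : Type*} [MeasurableSpace X] (M : Set X → (H →L[ℂ] H)) : Prop :=
  IsPOVM M ∧ ∀ A : Set X, MeasurableSet A → M A * M A = M A

/-- The finite measure `μ_ψ^M (A) = ⟨ψ, M(A) ψ⟩` associated to a POV measure `M`
and a vector `ψ`. (Junk value `0` if `M` is not a POV measure.) -/
def vecMeasure {X : Type*} [MeasurableSpace X] (M : Set X → (H →L[ℂ] H)) (ψ : H) :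
    Measure X :=
  if hM : IsPOVM M then
    Measure.ofMeasurable (fun A _ => ENNReal.ofReal (inner ℂ ψ (M A ψ) : ℂ).re)
      (by simp [hM.empty])
      (by
        intro A hA hd
        have h := hM.m_iUnion ψ A hA hd
        have hre : HasSum (fun n => ((inner ℂ ψ (M (A n) ψ) : ℂ)).re)
            ((inner ℂ ψ (M (⋃ n, A n) ψ) : ℂ)).re := h.mapL Complex.reCLM
        have hnn : ∀ n, 0 ≤ ((inner ℂ ψ (M (A n) ψ) : ℂ)).re := by
          intro n
          have h2 := (hM.pos (A n) (hA n)).2 ψ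
          rw [ContinuousLinearMap.reApplyInnerSelf] at h2
          simpa [inner_re_symm] using h2
        try dsimp only
        rw [← hre.tsum_eq]
        exact ENNReal.ofReal_tsum_of_nonneg hnn hre.summable)
  else 0

lemma vecMeasure_apply {X : Type*} [MeasurableSpace X] {M : Set X → (H →L[ℂ] H)}
    (hM : IsPOVM M) (ψ : H) {A : Set X} (hA : MeasurableSet A) :
    vecMeasure M ψ A = ENNReal.ofReal (inner ℂ ψ (M A ψ) : ℂ).re := by
  rw [vecMeasure, dif_pos hM, Measure.ofMeasurable_apply _ hA]

instance {X : Type*} [MeasurableSpace X] (M : Set X → (H →L[ℂ] H)) (ψ : H) :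
    IsFiniteMeasure (vecMeasure M ψ) := by
  constructor
  by_cases hM : IsPOVM M
  · rw [vecMeasure_apply hM ψ MeasurableSet.univ]
    exact ENNReal.ofReal_lt_top
  · rw [vecMeasure, dif_neg hM]
    simp

lemma vecMeasure_toReal {X : Type*} [MeasurableSpace X] {M : Set X → (H →L[ℂ] H)}
    (hM : IsPOVM M) (ψ : H) {A : Set X} (hA : MeasurableSet A) :
    (vecMeasure M ψ A).toReal = (inner ℂ ψ (M A ψ) : ℂ).re := by
  rw [vecMeasure_apply hM ψ hA, ENNReal.toReal_ofReal]
  have h2 := (hM.pos A hA).re_inner_nonneg_right ψ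
  simpa [RCLike.re_to_complex] using h2

lemma vecMeasure_eq_zero {X : Type*} [MeasurableSpace X] {M : Set X → (H →L[ℂ] H)}
    (hM : IsPOVM M) (ψ : H) {A : Set X} (hA : MeasurableSet A) (h : M A = 0) :
    vecMeasure M ψ A = 0 := by
  rw [vecMeasure_apply hM ψ hA, h]
  simp

/-- vanishing measure gives vanishing vector. -/
lemma apply_eq_zero_of_vecMeasure_eq_zero {X : Type*} [MeasurableSpace X]
    {M : Set X → (H →L[ℂ] H)} (hM : IsPOVM M) {ψ : H} {A : Set X} (hA : MeasurableSet A)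
    (h : vecMeasure M ψ A = 0) : M A ψ = 0 := by
  rw [vecMeasure_apply hM ψ hA] at h
  have hnn := (hM.pos A hA).re_inner_nonneg_right ψ
  have hre : (inner ℂ ψ (M A ψ) : ℂ).re = 0 := by
    have hnn' : 0 ≤ (inner ℂ ψ (M A ψ) : ℂ).re := by
      simpa [RCLike.re_to_complex] using hnn
    rcases lt_or_eq_of_le hnn' with h' | h'
    · have hpos := ENNReal.ofReal_pos.2 h'
      rw [h] at hpos
      exact absurd hpos (lt_irrefl 0)
    · exact h'.symm
  apply pos_apply_eq_zero (hM.pos A hA)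
  rw [sa_inner_self_real (hM.pos A hA).isSelfAdjoint ψ, hre]
  simp

/-- `ν : X × ℬ → ℝ` is a weak Markov kernel with respect to the POV measure `M`. -/
def IsWeakMarkovKernel {X Y : Type*} [MeasurableSpace X] [MeasurableSpace Y]
    (M : Set X → (H →L[ℂ] H)) (ν : X → Set Y → ℝ) : Prop :=
  (∀ B : Set Y, MeasurableSet B → Measurable fun x => ν x B) ∧
  ∀ ψ : H,
    (∀ B : Set Y, MeasurableSet B →
      ∀ᵐ x ∂(vecMeasure M ψ), 0 ≤ ν x B ∧ ν x B ≤ 1) ∧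
    (∀ᵐ x ∂(vecMeasure M ψ), ν x Set.univ = 1) ∧
    (∀ᵐ x ∂(vecMeasure M ψ), ν x ∅ = 0) ∧
    (∀ B : ℕ → Set Y, (∀ n, MeasurableSet (B n)) → Pairwise (Function.onFun Disjoint B) →
      ∀ᵐ x ∂(vecMeasure M ψ), HasSum (fun n => ν x (B n)) (ν x (⋃ n, B n)))

/-- `F = ν ∘ M` : the POV measure `F` is the smearing of `M` with respect to `ν`. -/
def IsSmearing {X Y : Type*} [MeasurableSpace X] [MeasurableSpace Y]
    (M : Set X → (H →L[ℂ] H)) (ν : X → Set Y → ℝ) (F : Set Y → (H →L[ℂ] H)) : Prop :=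
  ∀ B : Set Y, MeasurableSet B → ∀ ψ : H,
    (inner ℂ ψ (F B ψ) : ℂ) = ((∫ x, ν x B ∂(vecMeasure M ψ) : ℝ) : ℂ)

/-- A weak Markov kernel has values in `{0,1}`. -/
def HasZeroOneValues {X Y : Type*} [MeasurableSpace X] [MeasurableSpace Y]
    (M : Set X → (H →L[ℂ] H)) (ν : X → Set Y → ℝ) : Prop :=
  ∀ B : Set Y, MeasurableSet B → ∀ ψ : H,
    ∀ᵐ x ∂(vecMeasure M ψ), ν x B = 0 ∨ ν x B = 1


lemma dir31 {X Y : Type*} [MeasurableSpace X] [MeasurableSpace Y]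
    {M : Set X → (H →L[ℂ] H)} (hM : IsPOVM M)
    {P : Set Y → (H →L[ℂ] H)} (hP : IsPVM P)
    {ν : X → Set Y → ℝ} (hν : IsWeakMarkovKernel M ν) (hsm : IsSmearing M ν P) :
    ∀ B : Set Y, MeasurableSet B → ∃ A : Set X, MeasurableSet A ∧ P B = M A := by
  intro B hB
  set Q := P B with hQ
  have hQ2 : Q * Q = Q := hP.2 B hB
  obtain ⟨hmeasν, hker⟩ := hν
  set g : X → ℝ := fun x => ν x B with hg
  have hgmeas : Measurable g := hmeasν B hB
  set A : Set X := g ⁻¹' {1} with hA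
  have hAmeas : MeasurableSet A := hgmeas (measurableSet_singleton 1)
  have hint : ∀ ψ : H, Integrable g (vecMeasure M ψ) := by
    intro ψ
    obtain ⟨hb, -, -, -⟩ := hker ψ
    refine Integrable.mono' (integrable_const 1) hgmeas.aestronglyMeasurable ?_
    filter_upwards [hb B hB] with x hx
    rw [Real.norm_eq_abs, abs_of_nonneg hx.1]
    exact hx.2
  have hint_eq : ∀ ψ : H, ∫ x, g x ∂(vecMeasure M ψ) = (inner ℂ ψ (Q ψ) : ℂ).re := by
    intro ψ
    have h1 := hsm B hB ψ
    have := congrArg Complex.re h1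
    simpa using this.symm
  -- ψ in the range of Q
  have claim1 : ∀ ψ : H, Q ψ = ψ → M Aᶜ ψ = 0 := by
    intro ψ hψ
    set μ := vecMeasure M ψ with hμ
    have hI : ∫ x, g x ∂μ = (inner ℂ ψ ψ : ℂ).re := by rw [hint_eq ψ, hψ]
    have huniv : (μ Set.univ).toReal = (inner ℂ ψ ψ : ℂ).re := by
      rw [vecMeasure_toReal hM ψ MeasurableSet.univ, hM.univ]
      rfl
    have hzero : ∫ x, (1 - g x) ∂μ = 0 := by
      rw [integral_sub (integrable_const 1) (hint ψ), integral_const, smul_eq_mul, mul_one,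
        hI, (show (vecMeasure M ψ).real Set.univ = (inner ℂ ψ ψ : ℂ).re from huniv), sub_self]
    have hae : ∀ᵐ x ∂μ, (fun x => 1 - g x) x = 0 := by
      obtain ⟨hb, -, -, -⟩ := hker ψ
      have hnn : 0 ≤ᵐ[μ] fun x => 1 - g x := by
        filter_upwards [hb B hB] with x hx
        simp only [Pi.zero_apply]
        linarith [hx.2]
      have := (integral_eq_zero_iff_of_nonneg_ae hnn
        ((integrable_const 1).sub (hint ψ))).mp hzero
      filter_upwards [this] with x hx
      exact hx
    have hμAc : μ Aᶜ = 0 := by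
      have : ∀ᵐ x ∂μ, g x = 1 := by
        filter_upwards [hae] with x hx
        linarith [hx]
      rw [ae_iff] at this
      have hss : Aᶜ ⊆ {x | ¬ g x = 1} := by
        intro x hx
        simpa [hA] using hx
      exact measure_mono_null hss this
    exact apply_eq_zero_of_vecMeasure_eq_zero hM hAmeas.compl hμAc
  -- ψ in the kernel of Q
  have claim2 : ∀ ψ : H, Q ψ = 0 → M A ψ = 0 := by
    intro ψ hψ
    set μ := vecMeasure M ψ with hμ
    have hI : ∫ x, g x ∂μ = 0 := by
      rw [hint_eq ψ, hψ]
      simp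
    have hae : ∀ᵐ x ∂μ, g x = 0 := by
      obtain ⟨hb, -, -, -⟩ := hker ψ
      have hnn : 0 ≤ᵐ[μ] g := by
        filter_upwards [hb B hB] with x hx
        exact hx.1
      have := (integral_eq_zero_iff_of_nonneg_ae hnn (hint ψ)).mp hI
      filter_upwards [this] with x hx
      exact hx
    have hμA : μ A = 0 := by
      rw [ae_iff] at hae
      refine measure_mono_null ?_ hae
      intro x hx
      have : g x = 1 := by simpa [hA] using hx
      simp [this]
    exact apply_eq_zero_of_vecMeasure_eq_zero hM hAmeas hμA
  refine ⟨A, hAmeas, ?_⟩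
  ext ψ
  have hQQψ : Q (Q ψ) = Q ψ := by
    have := congrFun (congrArg DFunLike.coe hQ2) ψ
    simpa using this
  have h2 : Q (ψ - Q ψ) = 0 := by
    rw [map_sub, hQQψ, sub_self]
  have hMAc : M Aᶜ (Q ψ) = 0 := claim1 (Q ψ) hQQψ
  have hMA2 : M A (ψ - Q ψ) = 0 := claim2 _ h2
  have hcompl := hM.compl_add hAmeas
  have hMAQψ : M A (Q ψ) = Q ψ := by
    have := congrFun (congrArg DFunLike.coe hcompl) (Q ψ)
    simp only [ContinuousLinearMap.add_apply, ContinuousLinearMap.one_apply] at this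
    rw [hMAc, add_zero] at this
    exact this
  calc P B ψ = Q ψ := rfl
    _ = M A (Q ψ) + M A (ψ - Q ψ) := by rw [hMAQψ, hMA2, add_zero]
    _ = M A ψ := by rw [← map_add]; congr 1; abel

lemma dir12 {X Y : Type*} [MeasurableSpace X] [MeasurableSpace Y]
    {M : Set X → (H →L[ℂ] H)} (hM : IsPOVM M)
    {P : Set Y → (H →L[ℂ] H)} (hP : IsPVM P)
    (h : ∀ B : Set Y, MeasurableSet B → ∃ A : Set X, MeasurableSet A ∧ P B = M A) :
    ∃ ν : X → Set Y → ℝ,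
      IsWeakMarkovKernel M ν ∧ HasZeroOneValues M ν ∧ IsSmearing M ν P := by
  classical
  set Aof : Set Y → Set X := fun B => if hB : MeasurableSet B then (h B hB).choose else ∅
    with hAof
  have hAprop : ∀ B : Set Y, MeasurableSet B → MeasurableSet (Aof B) ∧ M (Aof B) = P B := by
    intro B hB
    simp only [hAof, dif_pos hB]
    exact ⟨(h B hB).choose_spec.1, (h B hB).choose_spec.2.symm⟩
  set ν : X → Set Y → ℝ := fun x B => (Aof B).indicator (fun _ => 1) x with hν
  have hbound : ∀ x B, 0 ≤ ν x B ∧ ν x B ≤ 1 := by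
    intro x B
    simp only [hν]
    by_cases hx : x ∈ Aof B <;> simp [hx]
  -- the operator facts for σ-additivity
  refine ⟨ν, ⟨?_, ?_⟩, ?_, ?_⟩
  · -- measurability
    intro B hB
    exact (measurable_const (a := (1:ℝ))).indicator (hAprop B hB).1
  · -- the ψ-wise kernel conditions
    intro ψ
    set μ := vecMeasure M ψ with hμ
    refine ⟨?_, ?_, ?_, ?_⟩
    · intro B hB
      exact Filter.Eventually.of_forall fun x => hbound x B
    · -- univ
      have hu := hAprop Set.univ MeasurableSet.univ
      have hop : M (Aof Set.univ)ᶜ = 0 := by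
        have hc := hM.compl_add hu.1
        rw [hu.2, hP.1.univ] at hc
        have := congrArg (fun T => T - (1 : H →L[ℂ] H)) hc
        simpa using this
      have hnull : μ (Aof Set.univ)ᶜ = 0 := vecMeasure_eq_zero hM ψ hu.1.compl hop
      have : ∀ᵐ x ∂μ, x ∈ Aof Set.univ := by
        rw [ae_iff]
        exact measure_mono_null (fun x hx => hx) hnull
      filter_upwards [this] with x hx
      simp [hν, hx]
    · -- empty
      have hu := hAprop ∅ MeasurableSet.empty
      have hop : M (Aof ∅) = 0 := by rw [hu.2, hP.1.empty]
      have hnull : μ (Aof ∅) = 0 := vecMeasure_eq_zero hM ψ hu.1 hop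
      have : ∀ᵐ x ∂μ, x ∉ Aof ∅ := by
        rw [ae_iff]
        exact measure_mono_null (fun x hx => not_not.mp hx) hnull
      filter_upwards [this] with x hx
      simp [hν, hx]
    · -- σ-additivity
      intro B hB hd
      set A : ℕ → Set X := fun n => Aof (B n) with hA
      have hAn : ∀ n, MeasurableSet (A n) := fun n => (hAprop _ (hB n)).1
      have hMn : ∀ n, M (A n) = P (B n) := fun n => (hAprop _ (hB n)).2
      have hBU : MeasurableSet (⋃ n, B n) := MeasurableSet.iUnion hB
      set AU : Set X := Aof (⋃ n, B n) with hAU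
      have hAUm : MeasurableSet AU := (hAprop _ hBU).1
      have hMU : M AU = P (⋃ n, B n) := (hAprop _ hBU).2
      set Q : H →L[ℂ] H := P (⋃ n, B n) with hQdef
      have hQpos := hP.1.pos _ hBU
      have hQ2 : Q * Q = Q := hP.2 _ hBU
      have hQn2 : ∀ n, P (B n) * P (B n) = P (B n) := fun n => hP.2 _ (hB n)
      have hQnpos : ∀ n, (P (B n)).IsPositive := fun n => hP.1.pos _ (hB n)
      -- Q_n ≤ Q as projections, so Q_n Q = Q Q_n = Q_n
      have hQnQ : ∀ n, P (B n) * Q = P (B n) ∧ Q * P (B n) = P (B n) := by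
        intro n
        apply sandwich (hQnpos n) hQpos.isSelfAdjoint hQ2
        have hadd := hP.1.add_of_disjoint (hB n) (hBU.diff (hB n))
          Set.disjoint_sdiff_right
        rw [Set.union_diff_cancel (Set.subset_iUnion B n)] at hadd
        show (P (⋃ n, B n) - P (B n)).IsPositive
        rw [hadd]
        simpa using hP.1.pos _ (hBU.diff (hB n))
      -- orthogonality of the Q_n
      have horth : ∀ n m, n ≠ m → P (B n) * P (B m) = 0 := by
        intro n m hnm
        apply proj_mul_eq_zero (hQnpos n).isSelfAdjoint (hQn2 n)
          (hQnpos m).isSelfAdjoint (hQn2 m)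
        have hadd := hP.1.add_of_disjoint (hB n) (hB m) (hd hnm)
        have : ((1 : H →L[ℂ] H) - P (B n)) - P (B m) = 1 - P (B n ∪ B m) := by
          rw [hadd]; abel
        rw [this]
        exact hP.1.le_one _ ((hB n).union (hB m))
      -- intersections are operator-zero
      have hinter : ∀ n m, n ≠ m → M (A n ∩ A m) = 0 := by
        intro n m hnm
        apply zero_of_sandwich_two (hM.pos _ ((hAn n).inter (hAn m)))
          (hQnpos n).isSelfAdjoint (hQn2 n) (hQnpos m).isSelfAdjoint (hQn2 m)
          ?_ ?_ (horth n m hnm)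
        · have := hM.mono ((hAn n).inter (hAn m)) (hAn n) Set.inter_subset_left
          rwa [hMn n] at this
        · have := hM.mono ((hAn n).inter (hAn m)) (hAn m) Set.inter_subset_right
          rwa [hMn m] at this
      -- A n \ AU is operator-zero
      have hdiffop : ∀ n, M (A n \ AU) = 0 := by
        intro n
        have hQc : M AUᶜ = 1 - Q := by
          have hc := hM.compl_add hAUm
          rw [hMU] at hc
          have := congrArg (fun T => T - Q) hc
          simpa using this
        have h1mQ2 : ((1 : H →L[ℂ] H) - Q) * (1 - Q) = 1 - Q := by
          have hz : Q * (1 - Q) = 0 := by rw [mul_sub, mul_one, hQ2, sub_self]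
          rw [sub_mul, one_mul, hz, sub_zero]
        have h1mQsa : IsSelfAdjoint ((1 : H →L[ℂ] H) - Q) :=
          (IsSelfAdjoint.one _).sub hQpos.isSelfAdjoint
        apply zero_of_sandwich_two (hM.pos _ ((hAn n).diff hAUm))
          (hQnpos n).isSelfAdjoint (hQn2 n) h1mQsa h1mQ2
        · have := hM.mono ((hAn n).diff hAUm) (hAn n) Set.diff_subset
          rwa [hMn n] at this
        · have := hM.mono ((hAn n).diff hAUm) hAUm.compl (Set.diff_subset_compl _ _)
          rwa [hQc] at this
        · rw [mul_sub, mul_one, (hQnQ n).1, sub_self]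
      -- measure-level facts
      have hd0 : ∀ n m, n ≠ m → μ (A n ∩ A m) = 0 := fun n m hnm =>
        vecMeasure_eq_zero hM ψ ((hAn n).inter (hAn m)) (hinter n m hnm)
      have hdiff0 : ∀ n, μ (A n \ AU) = 0 := fun n =>
        vecMeasure_eq_zero hM ψ ((hAn n).diff hAUm) (hdiffop n)
      -- μ AU = ∑' μ (A n)
      have hsum_meas : μ AU = ∑' n, μ (A n) := by
        have hsum := hP.1.m_iUnion ψ B hB hd
        have hre : HasSum (fun n => ((inner ℂ ψ (P (B n) ψ) : ℂ)).re)
            ((inner ℂ ψ (Q ψ) : ℂ)).re := hsum.mapL Complex.reCLM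
        have hnn : ∀ n, 0 ≤ ((inner ℂ ψ (P (B n) ψ) : ℂ)).re := by
          intro n
          simpa [RCLike.re_to_complex] using (hQnpos n).re_inner_nonneg_right ψ
        have e1 : μ AU = ENNReal.ofReal ((inner ℂ ψ (Q ψ) : ℂ)).re := by
          rw [hμ, vecMeasure_apply hM ψ hAUm, hMU]
        have e2 : ∀ n, μ (A n) = ENNReal.ofReal ((inner ℂ ψ (P (B n) ψ) : ℂ)).re := by
          intro n
          rw [hμ, vecMeasure_apply hM ψ (hAn n), hMn n]
        rw [e1, ← hre.tsum_eq, ENNReal.ofReal_tsum_of_nonneg hnn hre.summable]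
        exact tsum_congr fun n => (e2 n).symm
      -- μ (⋃ A n) = ∑' μ (A n)
      have hUnion : μ (⋃ n, A n) = ∑' n, μ (A n) := by
        apply measure_iUnion₀
        · intro n m hnm
          exact hd0 n m hnm
        · exact fun n => (hAn n).nullMeasurableSet
      have hsub0 : μ ((⋃ n, A n) \ AU) = 0 := by
        rw [Set.iUnion_diff]
        exact measure_iUnion_null fun n => hdiff0 n
      have hAUdiff : μ (AU \ ⋃ n, A n) = 0 := by
        have e1 : μ (AU ∪ ⋃ n, A n) ≤ μ AU := by
          calc μ (AU ∪ ⋃ n, A n) = μ (AU ∪ ((⋃ n, A n) \ AU)) := by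
                rw [Set.union_diff_self]
            _ ≤ μ AU + μ ((⋃ n, A n) \ AU) := measure_union_le _ _
            _ = μ AU := by rw [hsub0, add_zero]
        have e2 : μ (AU \ ⋃ n, A n) = μ ((AU ∪ ⋃ n, A n) \ ⋃ n, A n) := by
          rw [Set.union_diff_right]
        rw [e2, measure_diff Set.subset_union_right
          (MeasurableSet.iUnion hAn).nullMeasurableSet (measure_ne_top μ _)]
        have : μ (AU ∪ ⋃ n, A n) ≤ μ (⋃ n, A n) := by
          rw [hUnion, ← hsum_meas]; exact e1
        exact le_antisymm (tsub_le_iff_right.mpr (by simpa using this)) zero_le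
      -- assemble the a.e. statement
      have hae1 : ∀ᵐ x ∂μ, ∀ n, ∀ m, n ≠ m → x ∉ A n ∩ A m := by
        rw [ae_all_iff]
        intro n
        rw [ae_all_iff]
        intro m
        by_cases hnm : n = m
        · exact Filter.Eventually.of_forall fun x h' => absurd hnm h'
        · have := hd0 n m hnm
          rw [← compl_compl (A n ∩ A m)] at this
          have h2 : ∀ᵐ x ∂μ, x ∉ A n ∩ A m := by
            rw [ae_iff]
            exact measure_mono_null (fun x hx => not_not.mp hx) (hd0 n m hnm)
          filter_upwards [h2] with x hx
          exact fun _ => hx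
      have hae2 : ∀ᵐ x ∂μ, ∀ n, x ∉ A n \ AU := by
        rw [ae_all_iff]
        intro n
        rw [ae_iff]
        exact measure_mono_null (fun x hx => not_not.mp hx) (hdiff0 n)
      have hae3 : ∀ᵐ x ∂μ, x ∉ AU \ ⋃ n, A n := by
        rw [ae_iff]
        exact measure_mono_null (fun x hx => not_not.mp hx) hAUdiff
      filter_upwards [hae1, hae2, hae3] with x hx1 hx2 hx3
      show HasSum (fun n => (Aof (B n)).indicator (fun _ => (1:ℝ)) x)
        ((Aof (⋃ n, B n)).indicator (fun _ => (1:ℝ)) x)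
      by_cases hxU : x ∈ AU
      · have hxA : x ∈ ⋃ n, A n := by
          by_contra hc
          exact hx3 ⟨hxU, hc⟩
        obtain ⟨n, hn⟩ := Set.mem_iUnion.mp hxA
        have heq : (fun m => (A m).indicator (fun _ => (1:ℝ)) x)
            = fun m => if m = n then (1:ℝ) else 0 := by
          funext m
          by_cases hmn : m = n
          · subst hmn
            simp [Set.indicator_of_mem hn]
          · have hxm : x ∉ A m := by
              intro hcon
              exact hx1 m n hmn ⟨hcon, hn⟩
            simp [Set.indicator_of_notMem hxm, hmn]
        have : (Aof (⋃ n, B n)).indicator (fun _ => (1:ℝ)) x = 1 :=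
          Set.indicator_of_mem hxU _
        rw [this]
        show HasSum (fun m => (A m).indicator (fun _ => (1:ℝ)) x) 1
        rw [heq]
        exact hasSum_ite_eq n 1
      · have hxn : ∀ n, x ∉ A n := by
          intro n hcon
          exact hx2 n ⟨hcon, hxU⟩
        have heq : (fun m => (A m).indicator (fun _ => (1:ℝ)) x) = fun _ => (0:ℝ) := by
          funext m
          exact Set.indicator_of_notMem (hxn m) _
        have : (Aof (⋃ n, B n)).indicator (fun _ => (1:ℝ)) x = 0 :=
          Set.indicator_of_notMem hxU _
        rw [this]
        show HasSum (fun m => (A m).indicator (fun _ => (1:ℝ)) x) 0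
        rw [heq]
        exact hasSum_zero
  · -- zero-one values
    intro B hB ψ
    apply Filter.Eventually.of_forall
    intro x
    by_cases hx : x ∈ Aof B
    · right; simp [hν, hx]
    · left; simp [hν, hx]
  · -- smearing
    intro B hB ψ
    have hu := hAprop B hB
    have e1 : ∫ x, ν x B ∂(vecMeasure M ψ) = (vecMeasure M ψ (Aof B)).toReal := by
      simp only [hν]
      exact integral_indicator_one hu.1
    rw [e1, vecMeasure_toReal hM ψ hu.1, hu.2]
    exact sa_inner_self_real (hP.1.pos B hB).isSelfAdjoint ψ

/-- For a POV measure `M` and a PV measure `P` the following are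
equivalent: (i) `ℛ(P) ⊆ ℛ(M)`; (ii) `P = ν ∘ M` for a weak Markov kernel `ν`
with values in `{0,1}`; (iii) `P = ν ∘ M` for a weak Markov kernel `ν`. -/
theorem pv_range_subset_tfae
    [TopologicalSpace.SeparableSpace H]
    {X Y : Type*} [MeasurableSpace X] [MeasurableSpace Y]
    (M : Set X → (H →L[ℂ] H)) (hM : IsPOVM M)
    (P : Set Y → (H →L[ℂ] H)) (hP : IsPVM P) :
    [ (∀ B : Set Y, MeasurableSet B → ∃ A : Set X, MeasurableSet A ∧ P B = M A),
      (∃ ν : X → Set Y → ℝ,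
        IsWeakMarkovKernel M ν ∧ HasZeroOneValues M ν ∧ IsSmearing M ν P),
      (∃ ν : X → Set Y → ℝ, IsWeakMarkovKernel M ν ∧ IsSmearing M ν P) ].TFAE := by
  tfae_have 1 → 2 := fun h1 => dir12 hM hP h1
  tfae_have 2 → 3 := fun ⟨ν, hν, _, hsm⟩ => ⟨ν, hν, hsm⟩
  tfae_have 3 → 1 := fun ⟨ν, hν, hsm⟩ => dir31 hM hP hν hsm
  tfae_finish

end
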